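/- Let N ≥ 3 and let |ε⟩, |ε'⟩ be two linearly independent single-qubit unit vectors. Let |ψ⟩ be the normalized N-qubit state proportional to Σ_{j=1}^N |ε⟩^{⊗(j−1)} ⊗ |ε'⟩ ⊗ |ε⟩^{⊗(N−j)} (a symmetric state of the SLOCC class D_{N−1,1} of the Dicke state |D_N^{(1)}⟩). Then for every subset S of the qubits with |S| ≤ N−2, the reduced density operator ρ_{¬S}(ψ) is entangled; i.e., |ψ⟩ is robust with respect to the loss of any number t ≤ N−2 of qubits. -/

import Mathlib

open scoped BigOperators ComplexConjugate
open Finset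

noncomputable section

/-- A single-qubit unit vector in `ℂ²`. -/
def IsUnitQubit (e : Fin 2 → ℂ) : Prop := ∑ j, Complex.normSq (e j) = 1

/-- Norm-one condition for a multiqubit vector on the register `ι`. -/
def IsUnitState {ι : Type*} [Fintype ι] [DecidableEq ι] (ψ : (ι → Fin 2) → ℂ) : Prop :=
  ∑ x, Complex.normSq (ψ x) = 1

/-- The product state `⊗ᵢ eᵢ`. -/
def prodState {ι : Type*} [Fintype ι] (e : ι → Fin 2 → ℂ) : (ι → Fin 2) → ℂ :=
  fun x => ∏ i, e i (x i)

/-- A pure state is a product state if it is a tensor product of single-qubit unit vectors. -/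
def IsProductState {ι : Type*} [Fintype ι] (ψ : (ι → Fin 2) → ℂ) : Prop :=
  ∃ e : ι → Fin 2 → ℂ, (∀ i, IsUnitQubit (e i)) ∧ ψ = prodState e

/-- A pure state is entangled if it is not a product state. -/
def IsEntangledState {ι : Type*} [Fintype ι] (ψ : (ι → Fin 2) → ℂ) : Prop :=
  ¬ IsProductState ψ

/-- The projector `|v⟩⟨v|` as a matrix. -/
def proj {α : Type*} (v : α → ℂ) : Matrix α α ℂ :=
  Matrix.of fun x y => v x * conj (v y)

/-- A density matrix on the qubit register `ι` is separable if it is a finite convex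
combination of projectors onto product states (and entangled otherwise). -/
def IsSeparableDensity {ι : Type*} [Fintype ι] (ρ : Matrix (ι → Fin 2) (ι → Fin 2) ℂ) : Prop :=
  ∃ (n : ℕ) (w : Fin n → ℝ) (e : Fin n → ι → Fin 2 → ℂ),
    (∀ m, 0 ≤ w m) ∧ (∑ m, w m = 1) ∧ (∀ m i, IsUnitQubit (e m i)) ∧
    ρ = ∑ m, (w m : ℂ) • proj (prodState (e m))

/-- Assemble a full assignment of the `N` qubits from an assignment `x` of the qubits outside
`S` and an assignment `z` of the qubits in `S`. -/
def mergeCompl {N : ℕ} (S : Finset (Fin N)) (x : {i : Fin N // i ∉ S} → Fin 2)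
    (z : {i : Fin N // i ∈ S} → Fin 2) : Fin N → Fin 2 :=
  fun i => if h : i ∈ S then z ⟨i, h⟩ else x ⟨i, h⟩

/-- The reduced density operator `ρ_{¬S}(ψ)`: the partial trace of `|ψ⟩⟨ψ|` over the qubits
in `S`. -/
def reducedState {N : ℕ} (ψ : (Fin N → Fin 2) → ℂ) (S : Finset (Fin N)) :
    Matrix ({i : Fin N // i ∉ S} → Fin 2) ({i : Fin N // i ∉ S} → Fin 2) ℂ :=
  Matrix.of fun x y => ∑ z : {i : Fin N // i ∈ S} → Fin 2,
    ψ (mergeCompl S x z) * conj (ψ (mergeCompl S y z))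


section Aux
variable {ι : Type*} [Fintype ι] [DecidableEq ι]

def alphaF (A v : Fin 2 → ℂ) : ℂ := ∑ k, A k * v k

def lamW (W : (ι → Fin 2) → ℂ) (i₁ : ι) (p : ι → Fin 2 → ℂ) (m : Fin 2 → ℂ) : ℂ :=
  ∑ x : ι → Fin 2, conj (W x) * ((∏ i ∈ univ.erase i₁, p i (x i)) * conj (m (x i₁)))

def Kfun (W : (ι → Fin 2) → ℂ) (i₁ : ι) (a b : (ι → Fin 2) → ℂ) : ℂ :=
  ∑ x : ι → Fin 2, ∑ y : ι → Fin 2,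
    conj (W x) * a (Function.update x i₁ (y i₁)) * conj (b (Function.update y i₁ (x i₁))) * W y

def Qquad (W : (ι → Fin 2) → ℂ) (i₁ : ι) (ρ : Matrix (ι → Fin 2) (ι → Fin 2) ℂ) : ℂ :=
  ∑ x : ι → Fin 2, ∑ y : ι → Fin 2,
    conj (W x) * ρ (Function.update x i₁ (y i₁)) (Function.update y i₁ (x i₁)) * W y

lemma sum_pi_prod (g : ι → Fin 2 → ℂ) :
    ∑ x : ι → Fin 2, ∏ i, g i (x i) = ∏ i, ∑ k, g i k := by
  rw [Finset.prod_univ_sum, Fintype.piFinset_univ]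

lemma prodState_update (p : ι → Fin 2 → ℂ) (i₁ : ι) (x : ι → Fin 2) (v : Fin 2) :
    prodState p (Function.update x i₁ v) = p i₁ v * ∏ i ∈ univ.erase i₁, p i (x i) := by
  unfold prodState
  rw [← Finset.mul_prod_erase _ _ (mem_univ i₁), Function.update_self]
  congr 1
  refine Finset.prod_congr rfl fun i hi => ?_
  rw [Function.update_of_ne (mem_erase.mp hi).1]

lemma Kfun_prod (W : (ι → Fin 2) → ℂ) (i₁ : ι) (p q : ι → Fin 2 → ℂ) :
    Kfun W i₁ (prodState p) (prodState q) = lamW W i₁ p (q i₁) * conj (lamW W i₁ q (p i₁)) := by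
  have e1 : conj (lamW W i₁ q (p i₁)) =
      ∑ y : ι → Fin 2, W y * ((∏ i ∈ univ.erase i₁, conj (q i (y i))) * p i₁ (y i₁)) := by
    rw [lamW, map_sum]
    refine Finset.sum_congr rfl fun y _ => ?_
    simp [map_prod]
  rw [e1, lamW, Finset.sum_mul_sum]
  unfold Kfun
  refine Finset.sum_congr rfl fun x _ => Finset.sum_congr rfl fun y _ => ?_
  rw [prodState_update p, prodState_update q, map_mul, map_prod]
  ring

lemma Kfun_sum_left {κ : Type*} [Fintype κ] (W : (ι → Fin 2) → ℂ) (i₁ : ι)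
    (a : κ → (ι → Fin 2) → ℂ) (b : (ι → Fin 2) → ℂ) :
    Kfun W i₁ (fun x => ∑ j, a j x) b = ∑ j, Kfun W i₁ (a j) b := by
  unfold Kfun
  have h : ∀ x y : ι → Fin 2,
      conj (W x) * (∑ j, a j (Function.update x i₁ (y i₁))) *
        conj (b (Function.update y i₁ (x i₁))) * W y =
      ∑ j, conj (W x) * a j (Function.update x i₁ (y i₁)) *
        conj (b (Function.update y i₁ (x i₁))) * W y := by
    intro x y; rw [Finset.mul_sum, Finset.sum_mul, Finset.sum_mul]
  simp only [h]
  calc (∑ x : ι → Fin 2, ∑ y : ι → Fin 2, ∑ j : κ, conj (W x) * a j (Function.update x i₁ (y i₁)) *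
        conj (b (Function.update y i₁ (x i₁))) * W y)
      = ∑ x : ι → Fin 2, ∑ j : κ, ∑ y : ι → Fin 2, conj (W x) * a j (Function.update x i₁ (y i₁)) *
        conj (b (Function.update y i₁ (x i₁))) * W y :=
        Finset.sum_congr rfl fun x _ => Finset.sum_comm
    _ = _ := Finset.sum_comm

lemma Kfun_sum_right {κ : Type*} [Fintype κ] (W : (ι → Fin 2) → ℂ) (i₁ : ι)
    (a : (ι → Fin 2) → ℂ) (b : κ → (ι → Fin 2) → ℂ) :
    Kfun W i₁ a (fun x => ∑ j, b j x) = ∑ j, Kfun W i₁ a (b j) := by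
  unfold Kfun
  have h : ∀ x y : ι → Fin 2,
      conj (W x) * a (Function.update x i₁ (y i₁)) *
        conj (∑ j, b j (Function.update y i₁ (x i₁))) * W y =
      ∑ j, conj (W x) * a (Function.update x i₁ (y i₁)) *
        conj (b j (Function.update y i₁ (x i₁))) * W y := by
    intro x y; rw [map_sum, Finset.mul_sum, Finset.sum_mul]
  simp only [h]
  calc (∑ x : ι → Fin 2, ∑ y : ι → Fin 2, ∑ j : κ, conj (W x) * a (Function.update x i₁ (y i₁)) *
        conj (b j (Function.update y i₁ (x i₁))) * W y)
      = ∑ x : ι → Fin 2, ∑ j : κ, ∑ y : ι → Fin 2, conj (W x) * a (Function.update x i₁ (y i₁)) *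
        conj (b j (Function.update y i₁ (x i₁))) * W y :=
        Finset.sum_congr rfl fun x _ => Finset.sum_comm
    _ = _ := Finset.sum_comm

lemma Qquad_sep_nonneg (W : (ι → Fin 2) → ℂ) (i₁ : ι)
    (ρ : Matrix (ι → Fin 2) (ι → Fin 2) ℂ)
    (n : ℕ) (w : Fin n → ℝ) (e : Fin n → ι → Fin 2 → ℂ)
    (hw : ∀ m, 0 ≤ w m)
    (hρ : ρ = ∑ m, (w m : ℂ) • proj (prodState (e m))) :
    0 ≤ (Qquad W i₁ ρ).re := by
  have key : Qquad W i₁ ρ =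
      ∑ m, ((w m * Complex.normSq (lamW W i₁ (e m) (e m i₁)) : ℝ) : ℂ) := by
    subst hρ
    unfold Qquad
    have h1 : ∀ x y : ι → Fin 2,
        (∑ m, (w m : ℂ) • proj (prodState (e m))) (Function.update x i₁ (y i₁))
          (Function.update y i₁ (x i₁)) =
        ∑ m, (w m : ℂ) * (prodState (e m) (Function.update x i₁ (y i₁)) *
          conj (prodState (e m) (Function.update y i₁ (x i₁)))) := by
      intro x y
      simp [Matrix.sum_apply, proj]
    simp only [h1]
    have h2 : ∀ x y : ι → Fin 2,
        conj (W x) * (∑ m, (w m : ℂ) * (prodState (e m) (Function.update x i₁ (y i₁)) *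
          conj (prodState (e m) (Function.update y i₁ (x i₁))))) * W y =
        ∑ m, (w m : ℂ) * (conj (W x) * prodState (e m) (Function.update x i₁ (y i₁)) *
          conj (prodState (e m) (Function.update y i₁ (x i₁))) * W y) := by
      intro x y
      rw [Finset.mul_sum, Finset.sum_mul]
      exact Finset.sum_congr rfl fun m _ => by ring
    simp only [h2]
    rw [show (∑ x : ι → Fin 2, ∑ y : ι → Fin 2, ∑ m,
        (w m : ℂ) * (conj (W x) * prodState (e m) (Function.update x i₁ (y i₁)) *
          conj (prodState (e m) (Function.update y i₁ (x i₁))) * W y)) =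
        ∑ m, ∑ x : ι → Fin 2, ∑ y : ι → Fin 2,
        (w m : ℂ) * (conj (W x) * prodState (e m) (Function.update x i₁ (y i₁)) *
          conj (prodState (e m) (Function.update y i₁ (x i₁))) * W y) from
      (Finset.sum_congr rfl fun x _ => Finset.sum_comm).trans Finset.sum_comm]
    refine Finset.sum_congr rfl fun m _ => ?_
    simp only [← Finset.mul_sum]
    have : (∑ x : ι → Fin 2, ∑ y : ι → Fin 2,
        conj (W x) * prodState (e m) (Function.update x i₁ (y i₁)) *
          conj (prodState (e m) (Function.update y i₁ (x i₁))) * W y) =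
        Kfun W i₁ (prodState (e m)) (prodState (e m)) := rfl
    rw [this, Kfun_prod, Complex.mul_conj]
    push_cast
    ring
  rw [key]
  rw [← Complex.ofReal_sum]
  rw [Complex.ofReal_re]
  exact Finset.sum_nonneg fun m _ => mul_nonneg (hw m) (Complex.normSq_nonneg _)

lemma lamW_eval (i₀ i₁ : ι) (hne : i₀ ≠ i₁) (A B : Fin 2 → ℂ) (δ : ℂ)
    (p : ι → Fin 2 → ℂ) (m : Fin 2 → ℂ) :
    lamW (fun x => conj ((-δ * A (x i₀) * conj (A (x i₁)) + B (x i₀) * conj (B (x i₁))) *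
        ∏ i ∈ (univ.erase i₁).erase i₀, A (x i))) i₁ p m =
      (-δ * alphaF A (p i₀) * conj (alphaF A m) + alphaF B (p i₀) * conj (alphaF B m)) *
        ∏ i ∈ (univ.erase i₁).erase i₀, alphaF A (p i) := by
  have hi₀ : i₀ ∈ univ.erase i₁ := mem_erase.mpr ⟨hne, mem_univ _⟩
  set E := (univ.erase i₁).erase i₀ with hE
  set g : ι → Fin 2 → ℂ := fun i k =>
    if i = i₀ then A k * p i₀ k else if i = i₁ then conj (A k) * conj (m k) else A k * p i k
    with hg
  set h : ι → Fin 2 → ℂ := fun i k =>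
    if i = i₀ then B k * p i₀ k else if i = i₁ then conj (B k) * conj (m k) else A k * p i k
    with hh
  have prodsplit : ∀ f : ι → ℂ, ∏ i, f i = f i₁ * (f i₀ * ∏ i ∈ E, f i) := by
    intro f
    rw [← Finset.mul_prod_erase _ _ (mem_univ i₁), ← Finset.mul_prod_erase _ _ hi₀]
  have hgE : ∀ x : ι → Fin 2, ∀ i ∈ E, g i (x i) = A (x i) * p i (x i) := by
    intro x i hi
    have h1 : i ≠ i₀ := (mem_erase.mp hi).1
    have h2 : i ≠ i₁ := (mem_erase.mp (mem_erase.mp hi).2).1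
    simp [hg, h1, h2]
  have hhE : ∀ x : ι → Fin 2, ∀ i ∈ E, h i (x i) = A (x i) * p i (x i) := by
    intro x i hi
    have h1 : i ≠ i₀ := (mem_erase.mp hi).1
    have h2 : i ≠ i₁ := (mem_erase.mp (mem_erase.mp hi).2).1
    simp [hh, h1, h2]
  have g0 : ∀ k, g i₀ k = A k * p i₀ k := fun k => by simp [hg]
  have g1 : ∀ k, g i₁ k = conj (A k) * conj (m k) := fun k => by simp [hg, Ne.symm hne]
  have h0 : ∀ k, h i₀ k = B k * p i₀ k := fun k => by simp [hh]
  have h1' : ∀ k, h i₁ k = conj (B k) * conj (m k) := fun k => by simp [hh, Ne.symm hne]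
  have key : ∀ x : ι → Fin 2,
      conj (conj ((-δ * A (x i₀) * conj (A (x i₁)) + B (x i₀) * conj (B (x i₁))) *
        ∏ i ∈ E, A (x i))) * ((∏ i ∈ univ.erase i₁, p i (x i)) * conj (m (x i₁))) =
      -δ * ∏ i, g i (x i) + ∏ i, h i (x i) := by
    intro x
    rw [Complex.conj_conj, prodsplit (fun i => g i (x i)), prodsplit (fun i => h i (x i)),
      Finset.prod_congr rfl (hgE x), Finset.prod_congr rfl (hhE x),
      ← Finset.mul_prod_erase (univ.erase i₁) _ hi₀, ← hE]
    simp only [Finset.prod_mul_distrib, g0, g1, h0, h1']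
    ring
  have sums : ∀ (q : ι → Fin 2 → ℂ), ∑ x : ι → Fin 2, ∏ i, q i (x i) = ∏ i, ∑ k, q i k :=
    sum_pi_prod
  have gsum0 : ∑ k, g i₀ k = alphaF A (p i₀) := by
    simp only [g0]; rfl
  have gsum1 : ∑ k, g i₁ k = conj (alphaF A m) := by
    rw [alphaF, map_sum]
    exact Finset.sum_congr rfl fun k _ => by rw [g1, map_mul]
  have hsum0 : ∑ k, h i₀ k = alphaF B (p i₀) := by
    simp only [h0]; rfl
  have hsum1 : ∑ k, h i₁ k = conj (alphaF B m) := by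
    rw [alphaF, map_sum]
    exact Finset.sum_congr rfl fun k _ => by rw [h1', map_mul]
  have gsumE : ∀ i ∈ E, ∑ k, g i k = alphaF A (p i) := by
    intro i hi
    have h1 : i ≠ i₀ := (mem_erase.mp hi).1
    have h2 : i ≠ i₁ := (mem_erase.mp (mem_erase.mp hi).2).1
    simp [hg, h1, h2, alphaF]
  have hsumE : ∀ i ∈ E, ∑ k, h i k = alphaF A (p i) := by
    intro i hi
    have h1 : i ≠ i₀ := (mem_erase.mp hi).1
    have h2 : i ≠ i₁ := (mem_erase.mp (mem_erase.mp hi).2).1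
    simp [hh, h1, h2, alphaF]
  unfold lamW
  calc (∑ x : ι → Fin 2,
        conj (conj ((-δ * A (x i₀) * conj (A (x i₁)) + B (x i₀) * conj (B (x i₁))) *
          ∏ i ∈ E, A (x i))) * ((∏ i ∈ univ.erase i₁, p i (x i)) * conj (m (x i₁))))
      = ∑ x : ι → Fin 2, (-δ * ∏ i, g i (x i) + ∏ i, h i (x i)) :=
        Finset.sum_congr rfl fun x _ => key x
    _ = -δ * ∑ x : ι → Fin 2, (∏ i, g i (x i)) + ∑ x : ι → Fin 2, (∏ i, h i (x i)) := by
        rw [Finset.sum_add_distrib, Finset.mul_sum]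
    _ = -δ * ∏ i, (∑ k, g i k) + ∏ i, (∑ k, h i k) := by rw [sums g, sums h]
    _ = _ := by
        rw [prodsplit (fun i => ∑ k, g i k), prodsplit (fun i => ∑ k, h i k),
          Finset.prod_congr rfl gsumE, Finset.prod_congr rfl hsumE,
          gsum0, gsum1, hsum0, hsum1]
        ring

lemma sum_split_S {N : ℕ} (S : Finset (Fin N)) (F : Fin N → ℂ) :
    ∑ i, F i = (∑ i : {i : Fin N // i ∉ S}, F ↑i) + ∑ i : {i : Fin N // i ∈ S}, F ↑i := by
  rw [← Finset.sum_compl_add_sum S F]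
  congr 1
  · exact (Finset.sum_subtype Sᶜ (fun _ => Finset.mem_compl) F).symm ▸ rfl
  · exact (Finset.sum_subtype S (fun _ => Iff.rfl) F).symm ▸ rfl

lemma prod_split_S {N : ℕ} (S : Finset (Fin N)) (F : Fin N → ℂ) :
    ∏ i, F i = (∏ i : {i : Fin N // i ∉ S}, F ↑i) * ∏ i : {i : Fin N // i ∈ S}, F ↑i := by
  rw [← Finset.prod_mul_prod_compl S F, mul_comm]
  congr 1
  · exact (Finset.prod_subtype Sᶜ (fun _ => Finset.mem_compl) F).symm ▸ rfl
  · exact (Finset.prod_subtype S (fun _ => Iff.rfl) F).symm ▸ rfl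

lemma mergeCompl_not_mem {N : ℕ} (S : Finset (Fin N)) (x : {i : Fin N // i ∉ S} → Fin 2)
    (z : {i : Fin N // i ∈ S} → Fin 2) (i : {i : Fin N // i ∉ S}) :
    mergeCompl S x z ↑i = x i := by
  have h := i.2
  simp [mergeCompl, h]

lemma mergeCompl_mem {N : ℕ} (S : Finset (Fin N)) (x : {i : Fin N // i ∉ S} → Fin 2)
    (z : {i : Fin N // i ∈ S} → Fin 2) (i : {i : Fin N // i ∈ S}) :
    mergeCompl S x z ↑i = z i := by
  have h := i.2
  simp [mergeCompl, h]


end Aux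

/-- Let `N ≥ 3` and let `ε`, `ε'` be linearly independent single-qubit unit
vectors.  Every normalized `N`-qubit state proportional to
`Σ_{j=1}^N |ε⟩^{⊗(j−1)} ⊗ |ε'⟩ ⊗ |ε⟩^{⊗(N−j)}` (a symmetric state of the SLOCC class
`D_{N−1,1}` of `|D_N^{(1)}⟩`) is robust with respect to the loss of any `t ≤ N − 2` qubits:
for every subset `S` with `|S| ≤ N − 2`, the reduced state `ρ_{¬S}(ψ)` is entangled. -/
theorem dickeClass_W_robust {N : ℕ} (hN : 3 ≤ N)
    (ε ε' : Fin 2 → ℂ) (hε : IsUnitQubit ε) (hε' : IsUnitQubit ε')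
    (hli : LinearIndependent ℂ ![ε, ε'])
    (ψ : (Fin N → Fin 2) → ℂ) (hunit : IsUnitState ψ)
    (c : ℂ) (hc : c ≠ 0)
    (hψ : ψ = fun x => c *
      ∑ j : Fin N, prodState (Function.update (fun _ : Fin N => ε) j ε') x) :
    ∀ S : Finset (Fin N), S.card ≤ N - 2 →
      ¬ IsSeparableDensity (reducedState ψ S) := by
  intro S hS hsep
  -- two indices outside S
  have hcard2 : 1 < Sᶜ.card := by
    have h1 : S.card ≤ N := by
      simpa using Finset.card_le_univ S
    rw [Finset.card_compl, Fintype.card_fin]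
    omega
  obtain ⟨a, ha, b, hb, hab⟩ := Finset.one_lt_card.mp hcard2
  set ι' := {i : Fin N // i ∉ S}
  let i₀ : ι' := ⟨a, Finset.mem_compl.mp ha⟩
  let i₁ : ι' := ⟨b, Finset.mem_compl.mp hb⟩
  have hne : i₀ ≠ i₁ := fun h => hab (congrArg Subtype.val h)
  have hi₀E : i₀ ∈ Finset.univ.erase i₁ := mem_erase.mpr ⟨hne, mem_univ _⟩
  set E : Finset ι' := (Finset.univ.erase i₁).erase i₀ with hE_def
  have hmemE : ∀ j : ι', j ≠ i₀ → j ≠ i₁ → j ∈ E :=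
    fun j h0 h1 => mem_erase.mpr ⟨h0, mem_erase.mpr ⟨h1, mem_univ _⟩⟩
  have hsplit : ∀ f : ι' → ℂ, ∑ j, f j = f i₁ + (f i₀ + ∑ j ∈ E, f j) := by
    intro f
    rw [← Finset.add_sum_erase _ f (mem_univ i₁), ← Finset.add_sum_erase _ f hi₀E, hE_def]
  -- dual basis
  set d : ℂ := ε 0 * ε' 1 - ε 1 * ε' 0 with hd_def
  have hd : d ≠ 0 := by
    intro h0
    rw [linearIndependent_fin2] at hli
    obtain ⟨hε'0, hsp⟩ := hli
    simp only [Matrix.cons_val_one, Matrix.head_cons, Matrix.cons_val_zero] at hε'0 hsp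
    have hcomp : ε' 0 ≠ 0 ∨ ε' 1 ≠ 0 := by
      by_contra hcon
      push_neg at hcon
      apply hε'0
      funext k
      fin_cases k <;> simp [hcon.1, hcon.2]
    have hd0 : ε 0 * ε' 1 = ε 1 * ε' 0 := by
      rw [hd_def] at h0
      linear_combination h0
    rcases hcomp with h | h
    · apply hsp (ε 0 / ε' 0)
      funext k
      fin_cases k
      · simp only [Pi.smul_apply, smul_eq_mul, Fin.zero_eta, Fin.mk_one]
        field_simp
      · simp only [Pi.smul_apply, smul_eq_mul, Fin.zero_eta, Fin.mk_one]
        field_simp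
        linear_combination hd0
    · apply hsp (ε 1 / ε' 1)
      funext k
      fin_cases k
      · simp only [Pi.smul_apply, smul_eq_mul, Fin.zero_eta, Fin.mk_one]
        field_simp
        linear_combination -hd0
      · simp only [Pi.smul_apply, smul_eq_mul, Fin.zero_eta, Fin.mk_one]
        field_simp
  set A : Fin 2 → ℂ := ![ε' 1 / d, -(ε' 0 / d)] with hA_def
  set B : Fin 2 → ℂ := ![-(ε 1 / d), ε 0 / d] with hB_def
  have hAe : alphaF A ε = 1 := by
    simp only [alphaF, Fin.sum_univ_two, hA_def, Matrix.cons_val_zero, Matrix.cons_val_one,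
      Matrix.head_cons]
    field_simp
    rw [hd_def]; ring
  have hAe' : alphaF A ε' = 0 := by
    simp only [alphaF, Fin.sum_univ_two, hA_def, Matrix.cons_val_zero, Matrix.cons_val_one,
      Matrix.head_cons]
    field_simp
    ring
  have hBe : alphaF B ε = 0 := by
    simp only [alphaF, Fin.sum_univ_two, hB_def, Matrix.cons_val_zero, Matrix.cons_val_one,
      Matrix.head_cons]
    field_simp
    ring
  have hBe' : alphaF B ε' = 1 := by
    simp only [alphaF, Fin.sum_univ_two, hB_def, Matrix.cons_val_zero, Matrix.cons_val_one,
      Matrix.head_cons]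
    field_simp
    rw [hd_def]; ring
  -- states
  set Φ : (ι' → Fin 2) → ℂ :=
    fun x => ∑ j : ι', prodState (Function.update (fun _ : ι' => ε) j ε') x with hΦ_def
  set G : (ι' → Fin 2) → ℂ := prodState (fun _ : ι' => ε) with hG_def
  set U : ({i : Fin N // i ∈ S} → Fin 2) → ℂ := prodState (fun _ => ε) with hU_def
  set V : ({i : Fin N // i ∈ S} → Fin 2) → ℂ :=
    fun z => ∑ j : {i : Fin N // i ∈ S}, prodState (Function.update (fun _ => ε) j ε') z
    with hV_def
  set T' : ℝ := ∑ z, Complex.normSq (V z) with hT'_def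
  have hT'nn : 0 ≤ T' := Finset.sum_nonneg fun z _ => Complex.normSq_nonneg _
  set δ : ℝ := 1 / (T' + 1) with hδ_def
  have hδpos : 0 < δ := by
    rw [hδ_def]; positivity
  set W : (ι' → Fin 2) → ℂ := fun x =>
    conj ((-(δ : ℂ) * A (x i₀) * conj (A (x i₁)) + B (x i₀) * conj (B (x i₁))) *
      ∏ i ∈ (Finset.univ.erase i₁).erase i₀, A (x i)) with hW_def
  have hlam : ∀ (p : ι' → Fin 2 → ℂ) (m : Fin 2 → ℂ), lamW W i₁ p m =
      (-(δ : ℂ) * alphaF A (p i₀) * conj (alphaF A m) + alphaF B (p i₀) * conj (alphaF B m)) *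
        ∏ i ∈ E, alphaF A (p i) := by
    intro p m
    rw [hW_def, hE_def]
    exact lamW_eval i₀ i₁ hne A B _ p m
  -- lam specializations
  have lam_const : ∀ m : Fin 2 → ℂ, lamW W i₁ (fun _ => ε) m = -(δ : ℂ) * conj (alphaF A m) := by
    intro m
    rw [hlam]
    simp [hAe, hBe]
  have lam_upd : ∀ (j : ι') (m : Fin 2 → ℂ),
      lamW W i₁ (Function.update (fun _ : ι' => ε) j ε') m =
      if j = i₀ then conj (alphaF B m) else if j = i₁ then -(δ : ℂ) * conj (alphaF A m)
        else 0 := by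
    intro j m
    rw [hlam]
    rcases eq_or_ne j i₀ with rfl | hj0
    · rw [if_pos rfl]
      have h1 : Function.update (fun _ : ι' => ε) i₀ ε' i₀ = ε' := Function.update_self _ _ _
      have h2 : ∀ i ∈ E, alphaF A (Function.update (fun _ : ι' => ε) i₀ ε' i) = 1 := by
        intro i hi
        rw [Function.update_of_ne (mem_erase.mp hi).1, hAe]
      rw [h1, hAe', hBe', Finset.prod_congr rfl h2]
      simp
    · rw [if_neg hj0]
      have h1 : Function.update (fun _ : ι' => ε) j ε' i₀ = ε :=
        Function.update_of_ne (Ne.symm hj0) _ _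
      rcases eq_or_ne j i₁ with rfl | hj1
      · rw [if_pos rfl]
        have h2 : ∀ i ∈ E, alphaF A (Function.update (fun _ : ι' => ε) i₁ ε' i) = 1 := by
          intro i hi
          rw [Function.update_of_ne (mem_erase.mp (mem_erase.mp hi).2).1, hAe]
        rw [h1, hAe, hBe, Finset.prod_congr rfl h2]
        simp
      · rw [if_neg hj1]
        have hjE : j ∈ E := hmemE j hj0 hj1
        have h2 : alphaF A (Function.update (fun _ : ι' => ε) j ε' j) = 0 := by
          rw [Function.update_self, hAe']
        rw [Finset.prod_eq_zero hjE h2, mul_zero]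
  -- psi decomposition
  have hpsi : ∀ (x : ι' → Fin 2) (z : {i : Fin N // i ∈ S} → Fin 2),
      ψ (mergeCompl S x z) = c * (Φ x * U z + G x * V z) := by
    intro x z
    rw [hψ]
    show c * (∑ j : Fin N,
      prodState (Function.update (fun _ : Fin N => ε) j ε') (mergeCompl S x z)) = _
    congr 1
    rw [sum_split_S S]
    rw [hΦ_def, hG_def, hU_def, hV_def]
    show _ = (∑ j : ι', prodState (Function.update (fun _ : ι' => ε) j ε') x) * U z
      + G x * ∑ j : {i : Fin N // i ∈ S}, prodState (Function.update
        (fun _ : {i : Fin N // i ∈ S} => ε) j ε') z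
    rw [Finset.sum_mul, Finset.mul_sum]
    congr 1
    · refine Finset.sum_congr rfl fun j _ => ?_
      show ∏ i : Fin N, Function.update (fun _ : Fin N => ε) ↑j ε' i (mergeCompl S x z i) = _
      rw [prod_split_S S]
      congr 1
      · refine Finset.prod_congr rfl fun i _ => ?_
        rw [mergeCompl_not_mem]
        rw [Function.update_apply, Function.update_apply]
        rcases eq_or_ne i j with rfl | hij
        · simp
        · rw [if_neg hij, if_neg (fun h => hij (Subtype.ext h))]
      · show _ = prodState (fun _ : {i : Fin N // i ∈ S} => ε) z
        refine Finset.prod_congr rfl fun i _ => ?_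
        rw [mergeCompl_mem]
        rw [Function.update_of_ne (fun h : (↑i : Fin N) = ↑j => j.2 (h ▸ i.2))]
    · refine Finset.sum_congr rfl fun j _ => ?_
      show ∏ i : Fin N, Function.update (fun _ : Fin N => ε) ↑j ε' i (mergeCompl S x z i) = _
      rw [prod_split_S S]
      congr 1
      · show _ = prodState (fun _ : ι' => ε) x
        refine Finset.prod_congr rfl fun i _ => ?_
        rw [mergeCompl_not_mem]
        rw [Function.update_of_ne (fun h : (↑i : Fin N) = ↑j => i.2 (h ▸ j.2))]
      · refine Finset.prod_congr rfl fun i _ => ?_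
        rw [mergeCompl_mem]
        rw [Function.update_apply, Function.update_apply]
        rcases eq_or_ne i j with rfl | hij
        · simp
        · rw [if_neg hij, if_neg (fun h => hij (Subtype.ext h))]
  -- entries of the reduced state
  set P : ℂ := ∑ z : {i : Fin N // i ∈ S} → Fin 2, U z * conj (U z) with hP_def
  set R1 : ℂ := ∑ z : {i : Fin N // i ∈ S} → Fin 2, U z * conj (V z) with hR1_def
  set R2 : ℂ := ∑ z : {i : Fin N // i ∈ S} → Fin 2, V z * conj (U z) with hR2_def
  set T : ℂ := ∑ z : {i : Fin N // i ∈ S} → Fin 2, V z * conj (V z) with hT_def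
  have hent : ∀ x y : ι' → Fin 2, reducedState ψ S x y =
      c * conj c * (P * (Φ x * conj (Φ y)) + R1 * (Φ x * conj (G y)) +
        R2 * (G x * conj (Φ y)) + T * (G x * conj (G y))) := by
    intro x y
    show (∑ z : {i : Fin N // i ∈ S} → Fin 2,
        ψ (mergeCompl S x z) * conj (ψ (mergeCompl S y z))) = _
    calc (∑ z : {i : Fin N // i ∈ S} → Fin 2,
          ψ (mergeCompl S x z) * conj (ψ (mergeCompl S y z)))
        = ∑ z : {i : Fin N // i ∈ S} → Fin 2, (c * conj c) *
            ((Φ x * conj (Φ y)) * (U z * conj (U z)) + (Φ x * conj (G y)) * (U z * conj (V z)) +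
             (G x * conj (Φ y)) * (V z * conj (U z)) + (G x * conj (G y)) * (V z * conj (V z))) := by
          refine Finset.sum_congr rfl fun z _ => ?_
          rw [hpsi x z, hpsi y z, map_mul, map_add, map_mul, map_mul]
          ring
      _ = _ := by
          rw [← Finset.mul_sum]
          congr 1
          rw [Finset.sum_add_distrib, Finset.sum_add_distrib, Finset.sum_add_distrib,
            ← Finset.mul_sum, ← Finset.mul_sum, ← Finset.mul_sum, ← Finset.mul_sum,
            ← hP_def, ← hR1_def, ← hR2_def, ← hT_def]
          ring
  have hQ : Qquad W i₁ (reducedState ψ S) =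
      c * conj c * (P * Kfun W i₁ Φ Φ + R1 * Kfun W i₁ Φ G +
        R2 * Kfun W i₁ G Φ + T * Kfun W i₁ G G) := by
    unfold Qquad Kfun
    calc (∑ x : ι' → Fin 2, ∑ y : ι' → Fin 2, conj (W x) *
          reducedState ψ S (Function.update x i₁ (y i₁)) (Function.update y i₁ (x i₁)) * W y)
        = ∑ x : ι' → Fin 2, ∑ y : ι' → Fin 2, (c * conj c) *
            (P * (conj (W x) * Φ (Function.update x i₁ (y i₁)) *
                conj (Φ (Function.update y i₁ (x i₁))) * W y) +
             R1 * (conj (W x) * Φ (Function.update x i₁ (y i₁)) *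
                conj (G (Function.update y i₁ (x i₁))) * W y) +
             R2 * (conj (W x) * G (Function.update x i₁ (y i₁)) *
                conj (Φ (Function.update y i₁ (x i₁))) * W y) +
             T * (conj (W x) * G (Function.update x i₁ (y i₁)) *
                conj (G (Function.update y i₁ (x i₁))) * W y)) := by
          refine Finset.sum_congr rfl fun x _ => Finset.sum_congr rfl fun y _ => ?_
          rw [hent]
          ring
      _ = _ := by
          simp only [Finset.sum_add_distrib, ← Finset.mul_sum]
  -- values of the K's
  have hKGG : Kfun W i₁ G G = (δ : ℂ) ^ 2 := by
    rw [hG_def, Kfun_prod, lam_const, hAe]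
    simp [Complex.conj_ofReal]
    ring
  have hll : ∀ j j' : ι',
      lamW W i₁ (Function.update (fun _ : ι' => ε) j ε')
        (Function.update (fun _ : ι' => ε) j' ε' i₁) =
      if j = i₀ then (if j' = i₁ then 1 else 0)
        else if j = i₁ then (if j' = i₁ then 0 else -(δ : ℂ)) else 0 := by
    intro j j'
    rw [lam_upd]
    rcases eq_or_ne j' i₁ with rfl | hj'
    · rw [if_pos rfl, Function.update_self, hAe', hBe']
      simp
    · rw [if_neg hj', Function.update_of_ne (Ne.symm hj'), hAe, hBe]
      simp [hj']
  have hKPP : Kfun W i₁ Φ Φ = -2 * (δ : ℂ) := by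
    have step : Kfun W i₁ Φ Φ = ∑ j : ι', ∑ j' : ι',
        lamW W i₁ (Function.update (fun _ : ι' => ε) j ε')
          (Function.update (fun _ : ι' => ε) j' ε' i₁) *
        conj (lamW W i₁ (Function.update (fun _ : ι' => ε) j' ε')
          (Function.update (fun _ : ι' => ε) j ε' i₁)) := by
      rw [hΦ_def]
      rw [Kfun_sum_left W i₁
        (fun j => prodState (Function.update (fun _ : ι' => ε) j ε')) _]
      refine Finset.sum_congr rfl fun j _ => ?_
      rw [Kfun_sum_right W i₁ _
        (fun j' => prodState (Function.update (fun _ : ι' => ε) j' ε'))]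
      exact Finset.sum_congr rfl fun j' _ => Kfun_prod W i₁ _ _
    rw [step]
    have hinner : ∀ j : ι', (∑ j' : ι',
        lamW W i₁ (Function.update (fun _ : ι' => ε) j ε')
          (Function.update (fun _ : ι' => ε) j' ε' i₁) *
        conj (lamW W i₁ (Function.update (fun _ : ι' => ε) j' ε')
          (Function.update (fun _ : ι' => ε) j ε' i₁))) =
        if j = i₀ then -(δ : ℂ) else if j = i₁ then -(δ : ℂ) else 0 := by
      intro j
      rcases eq_or_ne j i₀ with rfl | hj0
      · rw [if_pos rfl]
        have : ∀ j' : ι', lamW W i₁ (Function.update (fun _ : ι' => ε) i₀ ε')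
              (Function.update (fun _ : ι' => ε) j' ε' i₁) *
            conj (lamW W i₁ (Function.update (fun _ : ι' => ε) j' ε')
              (Function.update (fun _ : ι' => ε) i₀ ε' i₁)) =
            if j' = i₁ then -(δ : ℂ) else 0 := by
          intro j'
          rw [hll, hll]
          rcases eq_or_ne j' i₁ with rfl | hj'
          · simp [hne, Ne.symm hne, Complex.conj_ofReal]
          · simp [hne, hj']
        rw [Finset.sum_congr rfl fun j' _ => this j']
        rw [Finset.sum_ite_eq' Finset.univ i₁ (fun _ => -(δ : ℂ))]
        simp
      · rw [if_neg hj0]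
        rcases eq_or_ne j i₁ with rfl | hj1
        · rw [if_pos rfl]
          have : ∀ j' : ι', lamW W i₁ (Function.update (fun _ : ι' => ε) i₁ ε')
                (Function.update (fun _ : ι' => ε) j' ε' i₁) *
              conj (lamW W i₁ (Function.update (fun _ : ι' => ε) j' ε')
                (Function.update (fun _ : ι' => ε) i₁ ε' i₁)) =
              if j' = i₀ then -(δ : ℂ) else 0 := by
            intro j'
            rw [hll, hll]
            rcases eq_or_ne j' i₀ with rfl | hj'
            · simp [hne, Ne.symm hne, Complex.conj_ofReal]
            · rcases eq_or_ne j' i₁ with rfl | hj''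
              · simp [Ne.symm hne]
              · simp [hj', hj'']
          rw [Finset.sum_congr rfl fun j' _ => this j']
          rw [Finset.sum_ite_eq' Finset.univ i₀ (fun _ => -(δ : ℂ))]
          simp
        · rw [if_neg hj1]
          refine Finset.sum_eq_zero fun j' _ => ?_
          rw [hll, if_neg hj0, if_neg hj1, zero_mul]
    rw [Finset.sum_congr rfl fun j _ => hinner j, hsplit]
    have hEz : (∑ j ∈ E, if j = i₀ then -(δ : ℂ) else if j = i₁ then -(δ : ℂ) else 0) = 0 := by
      refine Finset.sum_eq_zero fun j hj => ?_
      rw [if_neg (mem_erase.mp hj).1, if_neg (mem_erase.mp (mem_erase.mp hj).2).1]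
    rw [hEz]
    rw [if_neg (Ne.symm hne), if_pos rfl, if_pos rfl]
    ring
  have hKPG : Kfun W i₁ Φ G = 0 := by
    rw [hΦ_def, hG_def]
    rw [Kfun_sum_left W i₁
      (fun j => prodState (Function.update (fun _ : ι' => ε) j ε')) _]
    refine Finset.sum_eq_zero fun j _ => ?_
    rw [Kfun_prod W i₁ _ _, lam_upd, lam_const]
    rcases eq_or_ne j i₀ with rfl | hj0
    · rw [if_pos rfl, hBe]
      simp
    · rcases eq_or_ne j i₁ with rfl | hj1
      · rw [if_neg hj0, if_pos rfl]
        rw [Function.update_self, hAe']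
        simp
      · rw [if_neg hj0, if_neg hj1, zero_mul]
  have hKGP : Kfun W i₁ G Φ = 0 := by
    rw [hΦ_def, hG_def]
    rw [Kfun_sum_right W i₁ _
      (fun j => prodState (Function.update (fun _ : ι' => ε) j ε'))]
    refine Finset.sum_eq_zero fun j _ => ?_
    rw [Kfun_prod W i₁ _ _, lam_upd, lam_const]
    rcases eq_or_ne j i₁ with rfl | hj1
    · rw [Function.update_self, hAe']
      simp
    · rw [Function.update_of_ne (Ne.symm hj1)]
      rcases eq_or_ne j i₀ with rfl | hj0
      · rw [if_pos rfl, hBe]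
        simp
      · rw [if_neg hj0, if_neg hj1]
        simp
  have hP1 : P = 1 := by
    rw [hP_def, hU_def]
    have hz : ∀ z : {i : Fin N // i ∈ S} → Fin 2,
        prodState (fun _ : {i : Fin N // i ∈ S} => ε) z *
          conj (prodState (fun _ : {i : Fin N // i ∈ S} => ε) z) =
        ∏ i : {i : Fin N // i ∈ S}, (ε (z i) * conj (ε (z i))) := by
      intro z
      unfold prodState
      rw [map_prod, ← Finset.prod_mul_distrib]
    rw [Finset.sum_congr rfl fun z _ => hz z]
    rw [sum_pi_prod (fun _ k => ε k * conj (ε k))]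
    have hone : (∑ k, ε k * conj (ε k)) = 1 := by
      have h2 : (∑ k, ε k * conj (ε k)) = ((∑ k, Complex.normSq (ε k) : ℝ) : ℂ) := by
        push_cast
        exact Finset.sum_congr rfl fun k _ => Complex.mul_conj _
      rw [h2, hε]
      norm_num
    rw [Finset.prod_congr rfl fun i _ => hone]
    simp
  have hTT : T = (T' : ℂ) := by
    rw [hT_def, hT'_def, Complex.ofReal_sum]
    exact Finset.sum_congr rfl fun z _ => Complex.mul_conj _
  have hQval : Qquad W i₁ (reducedState ψ S) =
      ((Complex.normSq c * (T' * δ ^ 2 - 2 * δ) : ℝ) : ℂ) := by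
    rw [hQ, hKGG, hKPP, hKPG, hKGP, hP1, hTT, Complex.mul_conj]
    push_cast
    ring
  obtain ⟨n, w, e, hw, hsum, hunitq, hρ⟩ := hsep
  have hnn := Qquad_sep_nonneg W i₁ _ n w e hw hρ
  rw [hQval, Complex.ofReal_re] at hnn
  have hcpos : 0 < Complex.normSq c := Complex.normSq_pos.mpr hc
  have hneg : T' * δ ^ 2 - 2 * δ < 0 := by
    have h1 : T' * δ < 1 := by
      rw [hδ_def]
      rw [mul_one_div]
      rw [div_lt_one (by linarith)]
      linarith
    nlinarith
  nlinarith
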